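/- (Theorem 4, finite temperature, via Choi matrices.) Let Φ and Ω be linear maps on d×d complex matrices whose normalized Choi matrices J(Φ) and J(Ω) are density matrices on ℂ^{d²} (i.e., both maps are completely positive and trace preserving). Let Z be a d²×d² positive semidefinite matrix with Re Tr[Z · J(Ω)] ≤ 1 (Z is a channel-robustness witness feasible for the free channel Ω), and suppose R := Re Tr[Z · J(Φ)] − 1 > 0. Fix β > 0 and λ > 0 with λ·β·R ≥ S(J(Φ)), set H = λ·Z, and let τ = τ_H^β be the thermal state on ℂ^{d²}. Then (λ + β⁻¹·S(τ)) · (F_H(J(Φ)) − F_H(τ)) ≥ (λ·(1+R) + β⁻¹·(S(τ) − S(J(Φ)))) · (F_H(J(Ω)) − F_H(τ)). (The work cost of preparing the Choi state of the free channel relative to that of the resourceful channel is at most (1 + λ⁻¹β⁻¹S(τ))/(1 + R + λ⁻¹β⁻¹(S(τ) − S(J(Φ))))). -/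

import Mathlib

open Matrix ComplexOrder Kronecker

/-- A density matrix: positive semidefinite with unit trace. -/
def IsDensityMatrix {n : Type*} [Fintype n] (ρ : Matrix n n ℂ) : Prop :=
  ρ.PosSemidef ∧ ρ.trace = 1

/-- The von Neumann entropy `S(ρ) = -∑ᵢ λᵢ log λᵢ` of a Hermitian matrix,
computed from its eigenvalues (junk value `0` for non-Hermitian matrices). -/
noncomputable def vnEntropy {n : Type*} [Fintype n] [DecidableEq n]
    (ρ : Matrix n n ℂ) : ℝ :=
  if h : ρ.IsHermitian then ∑ i, -(h.eigenvalues i * Real.log (h.eigenvalues i)) else 0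

/-- The thermal (Gibbs) state `exp(-βH)/Tr[exp(-βH)]`. -/
noncomputable def thermalState {n : Type*} [Fintype n] [DecidableEq n]
    (β : ℝ) (H : Matrix n n ℂ) : Matrix n n ℂ :=
  ((NormedSpace.exp (-(β : ℂ) • H)).trace)⁻¹ • NormedSpace.exp (-(β : ℂ) • H)

/-- The free energy `F_H(ρ) = Re Tr[Hρ] - β⁻¹ S(ρ)`. -/
noncomputable def freeEnergy {n : Type*} [Fintype n] [DecidableEq n]
    (β : ℝ) (H ρ : Matrix n n ℂ) : ℝ :=
  ((H * ρ).trace).re - β⁻¹ * vnEntropy ρ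

/-- The normalized Choi matrix `J(Φ) = (1/d) ∑_{i,j} Φ(E_{ij}) ⊗ E_{ij}` of a
linear map `Φ` on `d × d` complex matrices. -/
noncomputable def choiMatrix {d : ℕ}
    (Φ : Matrix (Fin d) (Fin d) ℂ →ₗ[ℂ] Matrix (Fin d) (Fin d) ℂ) :
    Matrix (Fin d × Fin d) (Fin d × Fin d) ℂ :=
  (d : ℂ)⁻¹ • ∑ i : Fin d, ∑ j : Fin d,
    (Φ (Matrix.single i j 1)) ⊗ₖ (Matrix.single i j 1)

section Helpers

variable {n : Type*} [Fintype n] [DecidableEq n]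

/-- The trace of a Hermitian complex matrix is the (real) sum of its eigenvalues. -/
lemma herm_trace_eq_sum {A : Matrix n n ℂ} (hA : A.IsHermitian) :
    A.trace = ((∑ i, hA.eigenvalues i : ℝ) : ℂ) := by
  conv_lhs => rw [hA.spectral_theorem, Unitary.conjStarAlgAut_apply]
  rw [Matrix.trace_mul_cycle]
  rw [Unitary.coe_star_mul_self, one_mul, Matrix.trace_diagonal]
  push_cast
  rfl

/-- The von Neumann entropy of a density matrix is nonnegative. -/
lemma vnEntropy_nonneg {ρ : Matrix n n ℂ} (h : IsDensityMatrix ρ) : 0 ≤ vnEntropy ρ := by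
  obtain ⟨hpsd, htr⟩ := h
  have hH := hpsd.isHermitian
  rw [vnEntropy, dif_pos hH]
  have hsum : ∑ i, hH.eigenvalues i = 1 := by
    have h1 := herm_trace_eq_sum hH
    rw [htr] at h1
    exact_mod_cast h1.symm
  refine Finset.sum_nonneg fun i _ => ?_
  have h0 : 0 ≤ hH.eigenvalues i := hpsd.eigenvalues_nonneg i
  have h1 : hH.eigenvalues i ≤ 1 := by
    rw [← hsum]
    exact Finset.single_le_sum (fun j _ => hpsd.eigenvalues_nonneg j) (Finset.mem_univ i)
  have hlog := Real.log_nonpos h0 h1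
  nlinarith

/-- The thermal state of a Hermitian Hamiltonian is a density matrix. -/
lemma thermal_isDensity [Nonempty n] {H : Matrix n n ℂ} (hH : H.IsHermitian) (β : ℝ) :
    IsDensityMatrix (thermalState β H) := by
  have hA : (-(β : ℂ) • H).IsHermitian := by
    unfold Matrix.IsHermitian at *
    rw [conjTranspose_smul, hH]
    congr 1
    simp
  set u : Matrix n n ℂ := (hA.eigenvectorUnitary : Matrix n n ℂ) with hu
  have h1 : star u * u = 1 := Matrix.UnitaryGroup.star_mul_self _
  have h2 : u * star u = 1 := Matrix.mem_unitaryGroup_iff.mp hA.eigenvectorUnitary.2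
  have hunit : IsUnit u := ⟨⟨u, star u, h2, h1⟩, rfl⟩
  have hinv : u⁻¹ = star u := Matrix.inv_eq_left_inv h1
  have hexp : NormedSpace.exp (-(β : ℂ) • H) =
      u * Matrix.diagonal (fun i => ((Real.exp (hA.eigenvalues i) : ℝ) : ℂ)) * star u := by
    conv_lhs => rw [hA.spectral_theorem, Unitary.conjStarAlgAut_apply]
    rw [← hu, ← hinv, Matrix.exp_conj u _ hunit, Matrix.exp_diagonal]
    have hfun : (NormedSpace.exp (RCLike.ofReal ∘ hA.eigenvalues : n → ℂ))
        = fun i => ((Real.exp (hA.eigenvalues i) : ℝ) : ℂ) := by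
      funext i
      rw [Pi.coe_exp]
      show NormedSpace.exp ((hA.eigenvalues i : ℝ) : ℂ) = _
      rw [← Complex.exp_eq_exp_ℂ, ← Complex.ofReal_exp]
    rw [hfun]
  set s : ℝ := ∑ i, Real.exp (hA.eigenvalues i) with hs
  have hspos : 0 < s := Finset.sum_pos (fun i _ => Real.exp_pos _) Finset.univ_nonempty
  have htr : (NormedSpace.exp (-(β : ℂ) • H)).trace = (s : ℂ) := by
    rw [hexp, Matrix.trace_mul_cycle, h1, one_mul, Matrix.trace_diagonal, hs]
    push_cast
    rfl
  constructor
  · rw [thermalState, htr, hexp]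
    have hd : ((s : ℂ))⁻¹ • (u * Matrix.diagonal (fun i => ((Real.exp (hA.eigenvalues i) : ℝ) : ℂ)) * star u)
        = u * Matrix.diagonal (fun i => ((s⁻¹ * Real.exp (hA.eigenvalues i) : ℝ) : ℂ)) * star u := by
      rw [← Matrix.smul_mul, ← Matrix.mul_smul, ← Matrix.diagonal_smul]
      have hfun2 : ((s : ℂ))⁻¹ • (fun i => ((Real.exp (hA.eigenvalues i) : ℝ) : ℂ))
          = fun i => ((s⁻¹ * Real.exp (hA.eigenvalues i) : ℝ) : ℂ) := by
        funext i
        simp only [Pi.smul_apply, smul_eq_mul]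
        push_cast
        ring
      rw [hfun2]
    rw [hd]
    have hpsd : (Matrix.diagonal (fun i => ((s⁻¹ * Real.exp (hA.eigenvalues i) : ℝ) : ℂ))).PosSemidef :=
      Matrix.posSemidef_diagonal_iff.mpr fun i => by
        rw [Complex.zero_le_real]
        positivity
    simpa [Matrix.star_eq_conjTranspose] using hpsd.mul_mul_conjTranspose_same u
  · rw [thermalState, Matrix.trace_smul, htr, smul_eq_mul]
    exact inv_mul_cancel₀ (by exact_mod_cast hspos.ne')

open scoped MatrixOrder Matrix.Norms.L2Operator in
/-- The real part of the trace of a product of two PSD matrices is nonnegative. -/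
lemma trace_mul_psd_re_nonneg {A B : Matrix n n ℂ} (hA : A.PosSemidef) (hB : B.PosSemidef) :
    0 ≤ ((A * B).trace).re := by
  obtain ⟨C, hC⟩ := CStarAlgebra.nonneg_iff_eq_star_mul_self.mp hB.nonneg
  have h : (A * B).trace = (C * A * Cᴴ).trace := by
    rw [hC, Matrix.star_eq_conjTranspose, ← Matrix.mul_assoc, Matrix.trace_mul_cycle]
  have hpsd := hA.mul_mul_conjTranspose_same C
  have hdiag : ∀ i, 0 ≤ ((C * A * Cᴴ) i i).re := by
    intro i
    have h0 := hpsd.dotProduct_mulVec_nonneg (Pi.single i 1)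
    have h1 : star (Pi.single i 1) ⬝ᵥ (C * A * Cᴴ) *ᵥ Pi.single i 1 = (C * A * Cᴴ) i i := by
      have hstar : star (Pi.single i (1 : ℂ)) = (Pi.single i 1 : n → ℂ) := by
        funext j
        rcases eq_or_ne j i with rfl | hji
        · simp
        · simp [Pi.single_apply, hji]
      rw [hstar, single_dotProduct, one_mul]
      simp [Matrix.mulVec_single]
    rw [h1] at h0
    simpa using (Complex.le_def.mp h0).1
  rw [h, Matrix.trace]
  rw [Complex.re_sum]
  exact Finset.sum_nonneg fun i _ => hdiag i

end Helpers

/-- Theorem 4, finite temperature: the work cost of preparing the Choi state of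
a free channel `Ω` relative to that of a resourceful channel `Φ` is bounded via
the channel robustness witness value `R = Re Tr[Z·J(Φ)] − 1`, stated in a
cross-multiplied form with Hamiltonian `H = λZ`. -/
theorem channel_cost_finite_temperature {d : ℕ}
    (Φ Ω : Matrix (Fin d) (Fin d) ℂ →ₗ[ℂ] Matrix (Fin d) (Fin d) ℂ)
    (hΦ : IsDensityMatrix (choiMatrix Φ)) (hΩ : IsDensityMatrix (choiMatrix Ω))
    (Z : Matrix (Fin d × Fin d) (Fin d × Fin d) ℂ) (hZ : Z.PosSemidef)
    (hZΩ : ((Z * choiMatrix Ω).trace).re ≤ 1)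
    (hR : 0 < ((Z * choiMatrix Φ).trace).re - 1)
    (β lam : ℝ) (hβ : 0 < β) (hlam : 0 < lam)
    (hcond : vnEntropy (choiMatrix Φ) ≤ lam * β * (((Z * choiMatrix Φ).trace).re - 1)) :
    (lam + β⁻¹ * vnEntropy (thermalState β ((lam : ℂ) • Z))) *
        (freeEnergy β ((lam : ℂ) • Z) (choiMatrix Φ) -
          freeEnergy β ((lam : ℂ) • Z) (thermalState β ((lam : ℂ) • Z))) ≥
      (lam * (1 + (((Z * choiMatrix Φ).trace).re - 1)) +
          β⁻¹ * (vnEntropy (thermalState β ((lam : ℂ) • Z)) - vnEntropy (choiMatrix Φ))) *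
        (freeEnergy β ((lam : ℂ) • Z) (choiMatrix Ω) -
          freeEnergy β ((lam : ℂ) • Z) (thermalState β ((lam : ℂ) • Z))) := by
  rcases Nat.eq_zero_or_pos d with hd | hd
  · exfalso
    have h0 : (Z * choiMatrix Φ).trace = 0 := by
      subst hd
      rw [Matrix.trace]
      simp
    rw [h0] at hR
    simp at hR
    linarith
  haveI : Nonempty (Fin d × Fin d) := ⟨(⟨0, hd⟩, ⟨0, hd⟩)⟩
  -- the Hamiltonian is Hermitian
  have hH : ((lam : ℂ) • Z).IsHermitian := by
    unfold Matrix.IsHermitian at *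
    rw [conjTranspose_smul, hZ.1]
    congr 1
    simp
  set τ := thermalState β ((lam : ℂ) • Z) with hτ
  have hτd : IsDensityMatrix τ := thermal_isDensity hH β
  have hSτ : 0 ≤ vnEntropy τ := vnEntropy_nonneg hτd
  have hSΦ : 0 ≤ vnEntropy (choiMatrix Φ) := vnEntropy_nonneg hΦ
  have hSΩ : 0 ≤ vnEntropy (choiMatrix Ω) := vnEntropy_nonneg hΩ
  have ht : 0 ≤ ((Z * τ).trace).re := trace_mul_psd_re_nonneg hZ hτd.1
  have hfe : ∀ ρ : Matrix (Fin d × Fin d) (Fin d × Fin d) ℂ,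
      freeEnergy β ((lam : ℂ) • Z) ρ = lam * ((Z * ρ).trace).re - β⁻¹ * vnEntropy ρ := by
    intro ρ
    rw [freeEnergy, Matrix.smul_mul, Matrix.trace_smul]
    simp [smul_eq_mul, Complex.mul_re]
  rw [hfe, hfe, hfe]
  have hβi : 0 < β⁻¹ := inv_pos.mpr hβ
  have hδ : β⁻¹ * vnEntropy (choiMatrix Φ) ≤ lam * (((Z * choiMatrix Φ).trace).re - 1) := by
    calc β⁻¹ * vnEntropy (choiMatrix Φ)
        ≤ β⁻¹ * (lam * β * (((Z * choiMatrix Φ).trace).re - 1)) := by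
          exact mul_le_mul_of_nonneg_left hcond hβi.le
      _ = lam * (((Z * choiMatrix Φ).trace).re - 1) := by
          field_simp
  set a := ((Z * choiMatrix Φ).trace).re
  set b := ((Z * choiMatrix Ω).trace).re
  set t := ((Z * τ).trace).re
  set SΦ := vnEntropy (choiMatrix Φ)
  set SΩ := vnEntropy (choiMatrix Ω)
  set Sτ := vnEntropy τ
  have hc2 : 0 ≤ lam * (1 + (a - 1)) + β⁻¹ * (Sτ - SΦ) := by
    nlinarith [mul_nonneg hβi.le hSτ]
  have hε : 0 ≤ lam * (1 - b) + β⁻¹ * SΩ := by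
    nlinarith [mul_nonneg hβi.le hSΩ]
  nlinarith [mul_nonneg (sub_nonneg.mpr hδ) (mul_nonneg hlam.le ht),
    mul_nonneg hc2 hε]
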